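/- For every function f : [0,1]^d → ℝ, every integer t ≥ 1, every M ≥ 1, all indices i ∈ {0,…,k−1} and j ∈ {1,…,k−1}, and every point x ∈ C_i: ĝ_j(x) = a_j/t if π^j_r ≤ π^i_r for all r ∈ {1,…,d}, and ĝ_j(x) = 0 otherwise. In particular every g-unit is constant on each inner cell C_i. -/

import Mathlib

open Finset MeasureTheory

noncomputable section

/-- The ReLU function σ(z) = max(0, z). -/
def relu (z : ℝ) : ℝ := max 0 z

/-- `digit d t i r` is the `r`-th digit (most significant first) of the base-(t+1)
representation of `i`, i.e. the vector π^i, so that `i = Σ_r (digit d t i r) * (t+1)^(d-1-r)`. -/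
def digit (d t i : ℕ) (r : Fin d) : ℕ := i / (t + 1) ^ (d - 1 - (r : ℕ)) % (t + 1)

/-- The grid point π^i / t ∈ [0,1]^d. -/
def gridPt (d t i : ℕ) : Fin d → ℝ := fun r => (digit d t i r : ℝ) / t

/-- A g-unit with coefficient `a` located at grid point `i`:
`x ↦ a · σ(Σ_r −M·σ(−x_r + π^i_r/t) + 1/t)`. -/
def gUnit (d t : ℕ) (M a : ℝ) (i : ℕ) (x : Fin d → ℝ) : ℝ :=
  a * relu ((∑ r : Fin d, -M * relu (-(x r) + gridPt d t i r)) + 1 / t)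

/-- `net d t M f i` is the partial network `b + Σ_{j=1}^{i} ĝ_j` of the recursive
construction (with `b = f 0`). -/
def net (d t : ℕ) (M : ℝ) (f : (Fin d → ℝ) → ℝ) : ℕ → (Fin d → ℝ) → ℝ
  | 0 => fun _ => f (fun _ => 0)
  | i + 1 => fun x =>
      net d t M f i x +
        gUnit d t M ((t : ℝ) * (f (gridPt d t (i + 1)) - net d t M f i (gridPt d t (i + 1))))
          (i + 1) x

/-- The coefficient `a_i = t·(f(π^i/t) − (b + Σ_{j=1}^{i−1} ĝ_j(π^i/t)))` of the
construction (meaningful for `i ≥ 1`). -/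
def coef (d t : ℕ) (M : ℝ) (f : (Fin d → ℝ) → ℝ) (i : ℕ) : ℝ :=
  (t : ℝ) * (f (gridPt d t i) - net d t M f (i - 1) (gridPt d t i))

/-- The g-unit `ĝ_i` of the construction. -/
def gHat (d t : ℕ) (M : ℝ) (f : (Fin d → ℝ) → ℝ) (i : ℕ) : (Fin d → ℝ) → ℝ :=
  gUnit d t M (coef d t M f i) i

/-- The constructed network `f̂(x) = b + Σ_{i=1}^{k−1} ĝ_i(x)`, `k = (t+1)^d`. -/
def fHat (d t : ℕ) (M : ℝ) (f : (Fin d → ℝ) → ℝ) (x : Fin d → ℝ) : ℝ :=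
  f (fun _ => 0) + ∑ i ∈ Finset.Icc 1 ((t + 1) ^ d - 1), gHat d t M f i x

/-- `f` is ρ-Lipschitz in 1-norm on the set `s`. -/
def LipOneNorm (d : ℕ) (ρ : ℝ) (s : Set (Fin d → ℝ)) (f : (Fin d → ℝ) → ℝ) : Prop :=
  ∀ x ∈ s, ∀ x' ∈ s, |f x - f x'| ≤ ρ * ∑ r : Fin d, |x r - x' r|

/-- The cell `C*_i = {x : π^i_r/t ≤ x_r ≤ π^i_r/t + 1/t ∀r}`. -/
def cellStar (d t i : ℕ) : Set (Fin d → ℝ) :=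
  {x | ∀ r : Fin d, gridPt d t i r ≤ x r ∧ x r ≤ gridPt d t i r + 1 / t}

/-- The inner cell `C_i = {x : π^i_r/t ≤ x_r ≤ π^i_r/t + 1/t − 1/(Mt) ∀r}`. -/
def cellInner (d t : ℕ) (M : ℝ) (i : ℕ) : Set (Fin d → ℝ) :=
  {x | ∀ r : Fin d, gridPt d t i r ≤ x r ∧ x r ≤ gridPt d t i r + (1 / t - 1 / (M * t))}

/-- The boundary region `C'_i = C*_i \ C_i`. -/
def cellBoundary (d t : ℕ) (M : ℝ) (i : ℕ) : Set (Fin d → ℝ) :=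
  cellStar d t i \ cellInner d t M i


/-- For every f, t ≥ 1, M ≥ 1, indices i ∈ {0,…,k−1} and j ∈ {1,…,k−1},
and every point x ∈ C_i: ĝ_j(x) = a_j/t if π^j_r ≤ π^i_r for all r, and ĝ_j(x) = 0
otherwise. In particular every g-unit is constant on each inner cell C_i. -/
theorem stmt_9 (d t : ℕ) (hd : 1 ≤ d) (ht : 1 ≤ t) (M : ℝ) (hM : 1 ≤ M)
    (f : (Fin d → ℝ) → ℝ) :
    ∀ i < (t + 1) ^ d, ∀ j, 1 ≤ j → j < (t + 1) ^ d → ∀ x ∈ cellInner d t M i,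
      ((∀ r : Fin d, digit d t j r ≤ digit d t i r) →
        gHat d t M f j x = coef d t M f j / t) ∧
      (¬ (∀ r : Fin d, digit d t j r ≤ digit d t i r) →
        gHat d t M f j x = 0) := by
  intro i hi j hj1 hj2 x hx
  have ht0 : (0:ℝ) < t := by exact_mod_cast ht
  have hM0 : (0:ℝ) < M := lt_of_lt_of_le one_pos hM
  constructor
  · intro hle
    have hsum : ∀ r : Fin d, relu (-(x r) + gridPt d t j r) = 0 := by
      intro r
      have h1 := (hx r).1
      have h2 : gridPt d t j r ≤ gridPt d t i r := by
        unfold gridPt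
        have : (digit d t j r : ℝ) ≤ digit d t i r := by exact_mod_cast hle r
        exact (div_le_div_iff_of_pos_right ht0).mpr this
      unfold relu
      rw [max_eq_left]
      linarith
    unfold gHat gUnit
    have : (∑ r : Fin d, -M * relu (-(x r) + gridPt d t j r)) = 0 := by
      apply Finset.sum_eq_zero
      intro r _
      rw [hsum r]; ring
    rw [this]
    have h1t : (0:ℝ) ≤ 1 / t := by positivity
    unfold relu
    rw [zero_add, max_eq_right h1t]
    ring
  · intro hnot
    push_neg at hnot
    obtain ⟨r0, hr0⟩ := hnot
    have hgrid : gridPt d t i r0 + 1 / t ≤ gridPt d t j r0 := by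
      unfold gridPt
      rw [← add_div]
      apply (div_le_div_iff_of_pos_right ht0).mpr
      have : digit d t i r0 + 1 ≤ digit d t j r0 := hr0
      exact_mod_cast this
    have h2 := (hx r0).2
    have hMt : (0:ℝ) < M * t := by positivity
    have hval : 1 / (M * t) ≤ -(x r0) + gridPt d t j r0 := by linarith
    have hrelu0 : relu (-(x r0) + gridPt d t j r0) = -(x r0) + gridPt d t j r0 := by
      unfold relu
      rw [max_eq_right]
      have : (0:ℝ) < 1 / (M * t) := by positivity
      linarith
    have hterm : -M * relu (-(x r0) + gridPt d t j r0) ≤ -(1 / t) := by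
      rw [hrelu0]
      have h3 : M * (1 / (M * t)) = 1 / t := by
        field_simp
      nlinarith
    have hsumle : (∑ r : Fin d, -M * relu (-(x r) + gridPt d t j r)) ≤ -(1 / t) := by
      have := Finset.add_sum_erase Finset.univ
        (fun r => -M * relu (-(x r) + gridPt d t j r)) (Finset.mem_univ r0)
      rw [← this]
      have hrest : (∑ r ∈ Finset.univ.erase r0,
          -M * relu (-(x r) + gridPt d t j r)) ≤ 0 := by
        apply Finset.sum_nonpos
        intro r _
        have h0 : 0 ≤ relu (-(x r) + gridPt d t j r) := le_max_left _ _
        nlinarith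
      linarith
    unfold gHat gUnit
    have hz : relu ((∑ r : Fin d, -M * relu (-(x r) + gridPt d t j r)) + 1 / t) = 0 :=
      max_eq_left (by linarith)
    rw [hz]
    ring

end
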